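/- Let G be a finite connected multigraph without self-loops on vertex set V, with associated bilinear form x·y on ℤ^V. Then for every subset R ⊆ V and every z ∈ ℤ^V, one has ([R] − z)·z ≤ 0. -/

import Mathlib

/-- The bilinear form of the multigraph with edge multiplicities `ε`:
`x·y = Σ_v d(v) x_v y_v − Σ_{v≠w} ε(v,w) x_v y_w`, where `d(v) = Σ_w ε(v,w)`. -/
def gform {V : Type*} [Fintype V] [DecidableEq V] (ε : V → V → ℕ) (x y : V → ℤ) : ℤ :=
  (∑ v, (∑ w, (ε v w : ℤ)) * (x v * y v)) -
    ∑ v, ∑ w ∈ Finset.univ.filter (· ≠ v), (ε v w : ℤ) * (x v * y w)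

/-- The simple graph underlying the multigraph with edge multiplicities `ε`. -/
def gGraph {V : Type*} (ε : V → V → ℕ) : SimpleGraph V :=
  SimpleGraph.fromRel (fun v w => 0 < ε v w)

/-- Connectivity of the sub-multigraph induced on the set `S`. -/
def gConnOn {V : Type*} (ε : V → V → ℕ) (S : Set V) : Prop :=
  (SimpleGraph.fromRel (fun v w : S => 0 < ε v.1 w.1)).Connected

/-- `ℤ[V]`, the span of the all-ones vector `[V]` in `ℤ^V`. -/
def onesSub (V : Type*) : Submodule ℤ (V → ℤ) :=
  Submodule.span ℤ ({fun _ => (1 : ℤ)} : Set (V → ℤ))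

/-- The characteristic vector `[R] ∈ ℤ^V` of a finite set of vertices. -/
def chiF {V : Type*} [DecidableEq V] (R : Finset V) : V → ℤ :=
  fun v => if v ∈ R then 1 else 0

/-- Irreducibility, in the graph lattice `Λ(G) = ℤ^V/ℤ[V]`, of the class of
`z : ℤ^V`, stated on representatives: the class of `z` cannot be written as
`x + y` with `x, y` nonzero classes and `x·y ≥ 0`. -/
def gIrredRep {V : Type*} [Fintype V] [DecidableEq V] (ε : V → V → ℕ) (z : V → ℤ) : Prop :=
  ¬ ∃ x y : V → ℤ, x ∉ onesSub V ∧ y ∉ onesSub V ∧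
      z - (x + y) ∈ onesSub V ∧ 0 ≤ gform ε x y


lemma gform_key (c d : ℤ) (h1 : -1 ≤ c) (h2 : c ≤ 1) : (c - d) * d ≤ 0 := by
  rcases lt_trichotomy d 0 with h | h | h
  · have hd : d ≤ -1 := by omega
    nlinarith
  · simp [h]
  · have hd : 1 ≤ d := h
    nlinarith

lemma gform_double {V : Type*} [Fintype V] [DecidableEq V] (ε : V → V → ℕ)
    (hsymm : ∀ v w, ε v w = ε w v) (hloop : ∀ v, ε v v = 0) (x y : V → ℤ) :
    2 * gform ε x y = ∑ v, ∑ w, (ε v w : ℤ) * ((x v - x w) * (y v - y w)) := by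
  have swap : ∀ f : V → V → ℤ,
      (∑ v, ∑ w, (ε v w : ℤ) * f w v) = ∑ v, ∑ w, (ε v w : ℤ) * f v w := by
    intro f
    rw [Finset.sum_comm]
    exact Finset.sum_congr rfl fun v _ => Finset.sum_congr rfl fun w _ => by rw [hsymm]
  have hfil : (∑ v, ∑ w ∈ Finset.univ.filter (· ≠ v), (ε v w : ℤ) * (x v * y w))
      = ∑ v, ∑ w, (ε v w : ℤ) * (x v * y w) := by
    refine Finset.sum_congr rfl fun v _ => ?_
    rw [Finset.sum_filter]
    refine Finset.sum_congr rfl fun w _ => ?_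
    by_cases h : w = v
    · simp [h, hloop]
    · simp [h]
  unfold gform
  rw [hfil]
  have hd : (∑ v, (∑ w, (ε v w : ℤ)) * (x v * y v))
      = ∑ v, ∑ w, (ε v w : ℤ) * (x v * y v) := by
    refine Finset.sum_congr rfl fun v _ => ?_
    rw [Finset.sum_mul]
  rw [hd]
  have expand : (∑ v, ∑ w, (ε v w : ℤ) * ((x v - x w) * (y v - y w)))
      = (∑ v, ∑ w, (ε v w : ℤ) * (x v * y v)) + (∑ v, ∑ w, (ε v w : ℤ) * (x w * y w))
        - (∑ v, ∑ w, (ε v w : ℤ) * (x v * y w)) - (∑ v, ∑ w, (ε v w : ℤ) * (x w * y v)) := by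
    rw [← Finset.sum_add_distrib, ← Finset.sum_sub_distrib, ← Finset.sum_sub_distrib]
    refine Finset.sum_congr rfl fun v _ => ?_
    rw [← Finset.sum_add_distrib, ← Finset.sum_sub_distrib, ← Finset.sum_sub_distrib]
    refine Finset.sum_congr rfl fun w _ => ?_
    ring
  rw [expand, swap (fun a b => x a * y a), swap (fun a b => x a * y b)]
  ring

theorem stmt_3 {V : Type*} [Fintype V] [DecidableEq V] (ε : V → V → ℕ)
    (hcard : 2 ≤ Fintype.card V)
    (hsymm : ∀ v w, ε v w = ε w v) (hloop : ∀ v, ε v v = 0)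
    (hconn : (gGraph ε).Connected)
    (R : Finset V) (z : V → ℤ) :
    gform ε (chiF R - z) z ≤ 0 := by
  have h2 : 2 * gform ε (chiF R - z) z ≤ 0 := by
    rw [gform_double ε hsymm hloop]
    refine Finset.sum_nonpos fun v _ => Finset.sum_nonpos fun w _ => ?_
    have hx : (chiF R - z) v - (chiF R - z) w
        = (chiF R v - chiF R w) - (z v - z w) := by
      simp [Pi.sub_apply]; ring
    rw [hx]
    refine mul_nonpos_of_nonneg_of_nonpos (by positivity) ?_
    refine gform_key _ _ ?_ ?_ <;> unfold chiF <;> split_ifs <;> omega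
  linarith
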